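/- Let G be a locally compact group, μ a probability (Radon) measure on G, and A a Banach algebra of bounded continuous functions on G with ‖·‖_∞ ≤ C‖·‖_A, regarded inside A' via ⟨u, μ⟩ = ∫ u dμ. Suppose the map S : L²(G, μ) → A' defined by ⟨v, S f⟩ = ∫_G v f dμ is bounded. Then the map u ↦ u·μ from A to A' (where u·μ is the functional v ↦ ∫ uv dμ) is a weakly compact operator, i.e., μ is a weakly almost periodic functional on A. -/

import Mathlib

open Metric Filter MeasureTheory

/-- A map between normed spaces is a weakly compact operator if it sends the closed
unit ball to a relatively weakly compact set. -/
def IsWeaklyCompactOperator {E F : Type*} [NormedAddCommGroup E] [NormedSpace ℂ E]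
    [NormedAddCommGroup F] [NormedSpace ℂ F] (f : E → F) : Prop :=
  IsCompact (closure ((toWeakSpace ℂ F) '' (f '' closedBall (0 : E) 1)))

section Aux

variable {F : Type*} [NormedAddCommGroup F] [NormedSpace ℂ F]

/-- Continuous linear functionals on a normed space remain continuous on the weak space,
hence separate points there. -/
instance weakSpace_separatingDual : SeparatingDual ℂ (WeakSpace ℂ F) := by
  constructor
  intro x hx
  obtain ⟨f, hf⟩ := SeparatingDual.exists_ne_zero (R := ℂ) (V := F)
    (x := (toWeakSpace ℂ F).symm x) (by simpa using fun h => hx (by simpa using h))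
  exact ⟨⟨(f : F →ₗ[ℂ] ℂ).comp ((toWeakSpace ℂ F).symm : WeakSpace ℂ F →ₗ[ℂ] F),
    WeakBilin.eval_continuous ((topDualPairing ℂ F).flip) f⟩, hf⟩

instance weakSpace_t2 : T2Space (WeakSpace ℂ F) := SeparatingDual.t2Space (R := ℂ)

/-- The closed ball of a Hilbert space is weakly compact, via the Riesz representation
and the Banach–Alaoglu theorem. -/
lemma isCompact_toWeakSpace_closedBall {H : Type*} [NormedAddCommGroup H]
    [InnerProductSpace ℂ H] [CompleteSpace H] (r : ℝ) :
    IsCompact (toWeakSpace ℂ H '' closedBall (0 : H) r) := by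
  set D := InnerProductSpace.toDual ℂ H with hD
  set φ : WeakDual ℂ H → WeakSpace ℂ H := fun x' => toWeakSpace ℂ H (D.symm x') with hφ
  have hφcont : Continuous φ := by
    apply WeakBilin.continuous_of_continuous_eval
    intro ℓ
    have hkey : ∀ x' : WeakDual ℂ H,
        (topDualPairing ℂ H).flip (φ x') ℓ = starRingEnd ℂ (x' (D.symm ℓ)) := by
      intro x'
      have h1 : (topDualPairing ℂ H).flip (φ x') ℓ = ℓ (D.symm x') := rfl
      have h2 : ℓ (D.symm x') = inner (𝕜 := ℂ) (D.symm ℓ) (D.symm x') := by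
        conv_lhs => rw [← D.apply_symm_apply ℓ]
        rw [InnerProductSpace.toDual_apply_apply]
      have h3 : (x' : H →L[ℂ] ℂ) (D.symm ℓ) = inner (𝕜 := ℂ) (D.symm x') (D.symm ℓ) := by
        have e := congrArg (fun g : StrongDual ℂ H => g (D.symm ℓ))
          (D.apply_symm_apply (WeakDual.toStrongDual x'))
        exact e.symm.trans InnerProductSpace.toDual_apply_apply
      rw [h1, h2, h3, ← inner_conj_symm]
    simp only [hkey]
    exact Complex.continuous_conj.comp (WeakBilin.eval_continuous (topDualPairing ℂ H) _)
  have himg : φ '' (WeakDual.toStrongDual ⁻¹' closedBall (0 : StrongDual ℂ H) r)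
      = toWeakSpace ℂ H '' closedBall (0 : H) r := by
    ext z
    constructor
    · rintro ⟨x', hx', rfl⟩
      refine ⟨D.symm x', ?_, rfl⟩
      simp only [Set.mem_preimage, mem_closedBall, dist_zero_right] at hx' ⊢
      exact (D.symm.norm_map (WeakDual.toStrongDual x')).trans_le hx'
    · rintro ⟨x, hx, rfl⟩
      refine ⟨D x, ?_, by simp [φ]⟩
      simp only [Set.mem_preimage, mem_closedBall, dist_zero_right] at hx ⊢
      show D x ∈ closedBall (0 : StrongDual ℂ H) r
      simpa using hx
  rw [← himg]
  exact (WeakDual.isCompact_closedBall (𝕜 := ℂ) (E := H) (0 : StrongDual ℂ H) r).image hφcont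

end Aux

/-- A probability measure on a locally compact group defines a weakly almost
periodic functional on a Banach algebra `A` of bounded continuous functions:
the map `u ↦ u·μ` from `A` to `A'` is weakly compact, since it factors through
the reflexive space `L²(μ)`. -/
theorem probability_measure_weakly_almost_periodic
    {G : Type*} [TopologicalSpace G] [Group G] [IsTopologicalGroup G]
    [LocallyCompactSpace G] [MeasurableSpace G] [BorelSpace G]
    (μ : Measure G) [IsProbabilityMeasure μ]
    {A : Type*} [NormedCommRing A] [NormedAlgebra ℂ A]
    (j : A →ₗ[ℂ] (G → ℂ))
    (hjmul : ∀ u v : A, j (u * v) = j u * j v)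
    (hjcont : ∀ u : A, Continuous (j u))
    (C : ℝ) (hjbdd : ∀ (u : A) (x : G), ‖j u x‖ ≤ C * ‖u‖)
    (S : (Lp ℂ 2 μ) →L[ℂ] (A →L[ℂ] ℂ))
    (hS : ∀ (f : Lp ℂ 2 μ) (v : A), S f v = ∫ x, j v x * f x ∂μ)
    (M : A → (A →L[ℂ] ℂ))
    (hM : ∀ u v : A, M u v = ∫ x, j u x * j v x ∂μ) :
    IsWeaklyCompactOperator M := by
  classical
  -- each `j u` lies in `L²`
  have hmem : ∀ u : A, MemLp (j u) 2 μ := fun u =>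
    MemLp.of_bound (hjcont u).aestronglyMeasurable (C * ‖u‖) (ae_of_all _ (hjbdd u))
  set T : A → Lp ℂ 2 μ := fun u => (hmem u).toLp (j u) with hT
  -- norm bound for `T` on the unit ball
  set R : ℝ := max C 0 with hR
  have hTnorm : ∀ u : A, ‖u‖ ≤ 1 → ‖T u‖ ≤ R := by
    intro u hu
    show ‖(hmem u).toLp (j u)‖ ≤ R
    rw [Lp.norm_toLp]
    have h1 : eLpNorm (j u) 2 μ ≤ ENNReal.ofReal (C * ‖u‖) := by
      have := eLpNorm_le_of_ae_bound (p := 2) (μ := μ) (f := j u) (ae_of_all _ (hjbdd u))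
      simpa using this
    have h2 : ENNReal.ofReal (C * ‖u‖) ≤ ENNReal.ofReal R := by
      apply ENNReal.ofReal_le_ofReal
      rcases le_or_gt C 0 with hC | hC
      · calc C * ‖u‖ ≤ 0 := mul_nonpos_of_nonpos_of_nonneg hC (norm_nonneg u)
          _ ≤ R := le_max_right _ _
      · calc C * ‖u‖ ≤ C * 1 := by
              exact mul_le_mul_of_nonneg_left hu hC.le
          _ = C := mul_one C
          _ ≤ R := le_max_left _ _
    calc (eLpNorm (j u) 2 μ).toReal ≤ (ENNReal.ofReal R).toReal :=
          ENNReal.toReal_mono ENNReal.ofReal_ne_top (h1.trans h2)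
      _ = R := ENNReal.toReal_ofReal (le_max_right C 0)
  -- `M` factors through `S`
  have hfactor : ∀ u : A, M u = S (T u) := by
    intro u
    ext v
    rw [hM u v, hS (T u) v]
    refine integral_congr_ae ?_
    filter_upwards [(hmem u).coeFn_toLp] with x hx
    rw [hx, mul_comm]
  -- the weakly compact set through which everything factors
  have hK : IsCompact (toWeakSpace ℂ (Lp ℂ 2 μ) '' closedBall (0 : Lp ℂ 2 μ) R) :=
    isCompact_toWeakSpace_closedBall R
  have hK' : IsCompact (WeakSpace.map S '' (toWeakSpace ℂ (Lp ℂ 2 μ) '' closedBall (0 : Lp ℂ 2 μ) R)) :=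
    hK.image (WeakSpace.map S).continuous
  have hsub : (toWeakSpace ℂ (A →L[ℂ] ℂ)) '' (M '' closedBall (0 : A) 1)
      ⊆ WeakSpace.map S '' (toWeakSpace ℂ (Lp ℂ 2 μ) '' closedBall (0 : Lp ℂ 2 μ) R) := by
    rintro _ ⟨_, ⟨u, hu, rfl⟩, rfl⟩
    refine ⟨toWeakSpace ℂ (Lp ℂ 2 μ) (T u), ⟨T u, ?_, rfl⟩, ?_⟩
    · rw [mem_closedBall, dist_zero_right]
      exact hTnorm u (by simpa [dist_zero_right] using hu)
    · show WeakSpace.map S (toWeakSpace ℂ (Lp ℂ 2 μ) (T u)) = toWeakSpace ℂ (A →L[ℂ] ℂ) (M u)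
      rw [hfactor u]
      rfl
  exact hK'.of_isClosed_subset isClosed_closure
    (closure_minimal hsub hK'.isClosed)
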